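/- Any finite product of iterated integrals is a linear combination of single iterated integrals with nonnegative integer coefficients: for words τ_1,…,τ_p with letters in {1,…,n} and continuously differentiable drivers X^{(1)},…,X^{(n)} : [0,T] → ℝ, there exists a finitely supported function c from words to nonnegative integers, depending only on τ_1,…,τ_p (not on the drivers), supported on words of length |τ_1|+⋯+|τ_p|, such that ∏_{i=1}^p J^{τ_i}_{0,T} = Σ_α c(α) · J^α_{0,T}. -/

import Mathlib

/-- Iterated integral defined by recursion on the reversed word:
`iterRev X (j :: τ) t = ∫_0^t iterRev X τ s · (X j)'(s) ds`, so that the word is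
integrated with its last letter outermost. -/
noncomputable def iterRev {n : ℕ} (X : Fin n → ℝ → ℝ) : List (Fin n) → ℝ → ℝ
  | [] => fun _ => 1
  | j :: τ => fun t => ∫ s in (0:ℝ)..t, iterRev X τ s * deriv (X j) s

/-- `J X τ t` is the iterated integral `J^τ_{0,t}` of the drivers `X` along the word `τ`:
`∫_{0<u₁<⋯<u_k<t} (X^{τ₁})'(u₁)⋯(X^{τ_k})'(u_k) du₁⋯du_k`, with `J X [] t = 1`. -/
noncomputable def J {n : ℕ} (X : Fin n → ℝ → ℝ) (τ : List (Fin n)) (t : ℝ) : ℝ :=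
  iterRev X τ.reverse t

@[simp] lemma iterRev_nil {n : ℕ} (X : Fin n → ℝ → ℝ) (t : ℝ) : iterRev X [] t = 1 := rfl

/-! ### Auxiliary: shuffle product of words (as multisets) -/

/-- The shuffle product of two words, as a multiset of words. -/
def shuf {n : ℕ} : List (Fin n) → List (Fin n) → Multiset (List (Fin n))
  | [], b => {b}
  | x :: a, [] => {x :: a}
  | x :: a, y :: b =>
      ((shuf a (y :: b)).map (x :: ·)) + ((shuf (x :: a) b).map (y :: ·))
  termination_by a b => a.length + b.length

@[simp] lemma shuf_nil_left {n : ℕ} (b : List (Fin n)) : shuf [] b = {b} := by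
  simp [shuf]

@[simp] lemma shuf_nil_right {n : ℕ} (a : List (Fin n)) : shuf a [] = {a} := by
  cases a <;> simp [shuf]

lemma shuf_cons_cons {n : ℕ} (x y : Fin n) (a b : List (Fin n)) :
    shuf (x :: a) (y :: b) =
      ((shuf a (y :: b)).map (x :: ·)) + ((shuf (x :: a) b).map (y :: ·)) := by
  rw [shuf]

lemma length_mem_shuf {n : ℕ} :
    ∀ (a b : List (Fin n)), ∀ s ∈ shuf a b, s.length = a.length + b.length
  | [], b => by simp
  | x :: a, [] => by simp
  | x :: a, y :: b => by
      intro s hs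
      rw [shuf_cons_cons] at hs
      rcases Multiset.mem_add.1 hs with h | h <;>
        obtain ⟨u, hu, rfl⟩ := Multiset.mem_map.1 h
      · have := length_mem_shuf a (y :: b) u hu
        simp [this]; omega
      · have := length_mem_shuf (x :: a) b u hu
        simp [this]; omega
  termination_by a b => a.length + b.length

lemma mem_shuf_cons_cons_ne_nil {n : ℕ} {x y : Fin n} {a b s : List (Fin n)}
    (hs : s ∈ shuf (x :: a) (y :: b)) : s ≠ [] := by
  intro h0
  have := length_mem_shuf (x :: a) (y :: b) s hs
  rw [h0] at this
  simp at this

/-! ### Analytic facts about `iterRev` -/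

section Analytic

variable {n : ℕ} {X : Fin n → ℝ → ℝ}

lemma iterRev_continuous (hX : ∀ i, ContDiff ℝ 1 (X i)) :
    ∀ τ : List (Fin n), Continuous (iterRev X τ)
  | [] => continuous_const
  | j :: τ => by
      have hc : Continuous fun s => iterRev X τ s * deriv (X j) s :=
        (iterRev_continuous hX τ).mul ((hX j).continuous_deriv le_rfl)
      exact intervalIntegral.continuous_primitive
        (fun a b => hc.intervalIntegrable a b) 0

lemma iterRev_hasDerivAt (hX : ∀ i, ContDiff ℝ 1 (X i)) (j : Fin n) (τ : List (Fin n))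
    (t : ℝ) :
    HasDerivAt (iterRev X (j :: τ)) (iterRev X τ t * deriv (X j) t) t := by
  have hc : Continuous fun s => iterRev X τ s * deriv (X j) s :=
    (iterRev_continuous hX τ).mul ((hX j).continuous_deriv le_rfl)
  exact intervalIntegral.integral_hasDerivAt_right (hc.intervalIntegrable 0 t)
    (hc.stronglyMeasurableAtFilter _ _) hc.continuousAt

lemma iterRev_cons_zero (j : Fin n) (τ : List (Fin n)) : iterRev X (j :: τ) 0 = 0 := by
  simp [iterRev]

/-- Derivative of a multiset-sum of functions. -/
lemma hasDerivAt_multiset_sum {ι : Type*} (m : Multiset ι) (f : ι → ℝ → ℝ) (f' : ι → ℝ)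
    (t : ℝ) (h : ∀ i ∈ m, HasDerivAt (f i) (f' i) t) :
    HasDerivAt (fun u => ((m.map (fun i => f i u)).sum)) ((m.map f').sum) t := by
  induction m using Multiset.induction with
  | empty => simpa using hasDerivAt_const t (0 : ℝ)
  | cons a s ih =>
      simp only [Multiset.map_cons, Multiset.sum_cons]
      exact (h a (Multiset.mem_cons_self a s)).add
        (ih fun i hi => h i (Multiset.mem_cons_of_mem hi))

/-- The shuffle identity for `iterRev`. -/
lemma iterRev_mul (hX : ∀ i, ContDiff ℝ 1 (X i)) :
    ∀ (N : ℕ) (a b : List (Fin n)), a.length + b.length ≤ N → ∀ t : ℝ,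
      iterRev X a t * iterRev X b t =
        ((shuf a b).map (fun s => iterRev X s t)).sum := by
  intro N
  induction N with
  | zero =>
      intro a b hab t
      have ha : a = [] := List.length_eq_zero_iff.1 (by omega)
      have hb : b = [] := List.length_eq_zero_iff.1 (by omega)
      subst ha; subst hb; simp
  | succ N ih =>
      intro a b hab t
      match a, b with
      | [], b => simp
      | x :: a, [] => simp
      | x :: a, y :: b =>
        set f : ℝ → ℝ := fun u => iterRev X (x :: a) u * iterRev X (y :: b) u with hf
        set g : ℝ → ℝ :=
          fun u => ((shuf (x :: a) (y :: b)).map (fun s => iterRev X s u)).sum with hg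
        suffices h : ∀ u, f u = g u from h t
        have hab1 : a.length + (y :: b).length ≤ N := by
          simp at hab ⊢; omega
        have hab2 : (x :: a).length + b.length ≤ N := by
          simp at hab ⊢; omega
        have key : ∀ u : ℝ,
            HasDerivAt f (iterRev X a u * deriv (X x) u * iterRev X (y :: b) u +
              iterRev X (x :: a) u * (iterRev X b u * deriv (X y) u)) u ∧
            HasDerivAt g (iterRev X a u * deriv (X x) u * iterRev X (y :: b) u +
              iterRev X (x :: a) u * (iterRev X b u * deriv (X y) u)) u := by
          intro u
          constructor
          · exact (iterRev_hasDerivAt hX x a u).mul (iterRev_hasDerivAt hX y b u)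
          · have hgsplit : g = fun u =>
                ((shuf a (y :: b)).map (fun s => iterRev X (x :: s) u)).sum +
                ((shuf (x :: a) b).map (fun s => iterRev X (y :: s) u)).sum := by
              funext v
              simp only [hg, shuf_cons_cons, Multiset.map_add, Multiset.sum_add,
                Multiset.map_map, Function.comp_def]
            rw [hgsplit]
            have h1 : HasDerivAt
                (fun u => ((shuf a (y :: b)).map (fun s => iterRev X (x :: s) u)).sum)
                (((shuf a (y :: b)).map (fun s => iterRev X s u * deriv (X x) u)).sum) u :=
              hasDerivAt_multiset_sum _ _ _ _
                (fun s _ => iterRev_hasDerivAt hX x s u)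
            have h2 : HasDerivAt
                (fun u => ((shuf (x :: a) b).map (fun s => iterRev X (y :: s) u)).sum)
                (((shuf (x :: a) b).map (fun s => iterRev X s u * deriv (X y) u)).sum) u :=
              hasDerivAt_multiset_sum _ _ _ _
                (fun s _ => iterRev_hasDerivAt hX y s u)
            have := h1.add h2
            refine this.congr_deriv ?_
            rw [Multiset.sum_map_mul_right, Multiset.sum_map_mul_right,
              ← ih a (y :: b) hab1 u, ← ih (x :: a) b hab2 u]
            ring
        have h0 : f 0 = g 0 := by
          have hf0 : f 0 = 0 := by
            simp [hf, iterRev_cons_zero]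
          have hg0 : g 0 = 0 := by
            rw [hg]
            apply Multiset.sum_eq_zero
            intro r hr
            obtain ⟨s, hs, rfl⟩ := Multiset.mem_map.1 hr
            obtain ⟨z, s', rfl⟩ :=
              List.exists_cons_of_ne_nil (mem_shuf_cons_cons_ne_nil hs)
            exact iterRev_cons_zero z s'
          rw [hf0, hg0]
        intro u
        have hd : ∀ v, deriv (fun w => f w - g w) v = 0 := by
          intro v
          have := ((key v).1.sub (key v).2)
          have h' : HasDerivAt (fun w => f w - g w) _ v := this
          rw [h'.deriv]; ring
        have hdiff : Differentiable ℝ (fun w => f w - g w) :=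
          fun v => ((key v).1.sub (key v).2).differentiableAt
        have hconst := is_const_of_deriv_eq_zero hdiff hd u 0
        have h00 : f 0 - g 0 = 0 := by rw [h0]; ring
        have : f u - g u = 0 := by rw [hconst, h00]
        linarith

end Analytic

/-- Shuffle product in terms of un-reversed words. -/
def shufR {n : ℕ} (a b : List (Fin n)) : Multiset (List (Fin n)) :=
  (shuf a.reverse b.reverse).map List.reverse

lemma length_mem_shufR {n : ℕ} (a b : List (Fin n)) :
    ∀ s ∈ shufR a b, s.length = a.length + b.length := by
  intro s hs
  obtain ⟨u, hu, rfl⟩ := Multiset.mem_map.1 hs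
  have := length_mem_shuf a.reverse b.reverse u hu
  simpa using this

lemma J_mul {n : ℕ} {X : Fin n → ℝ → ℝ} (hX : ∀ i, ContDiff ℝ 1 (X i))
    (a b : List (Fin n)) (t : ℝ) :
    J X a t * J X b t = ((shufR a b).map (fun s => J X s t)).sum := by
  have h := iterRev_mul hX (a.reverse.length + b.reverse.length) a.reverse b.reverse
    le_rfl t
  unfold J shufR
  rw [h, Multiset.map_map]
  congr 1
  apply Multiset.map_congr rfl
  intro s _
  simp [J]

/-- Multiset version of the main theorem. -/
lemma main_multiset {n : ℕ} (T : ℝ) :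
    ∀ (p : ℕ) (τ : Fin p → List (Fin n)),
      ∃ m : Multiset (List (Fin n)),
        (∀ α ∈ m, α.length = ∑ i, (τ i).length) ∧
        ∀ X : Fin n → ℝ → ℝ, (∀ i, ContDiff ℝ 1 (X i)) →
          (∏ i, J X (τ i) T) = (m.map (fun α => J X α T)).sum := by
  intro p
  induction p with
  | zero =>
      intro τ
      exact ⟨{[]}, by simp, fun X _ => by simp [J]⟩
  | succ p ih =>
      intro τ
      obtain ⟨m', hm'len, hm'⟩ := ih (fun i => τ i.succ)
      refine ⟨m'.bind (fun α => shufR (τ 0) α), ?_, ?_⟩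
      · intro α hα
        obtain ⟨β, hβ, hαβ⟩ := Multiset.mem_bind.1 hα
        have h1 := length_mem_shufR (τ 0) β α hαβ
        have h2 := hm'len β hβ
        rw [h1, h2, Fin.sum_univ_succ]
      · intro X hXd
        rw [Fin.prod_univ_succ, hm' X hXd, ← Multiset.sum_map_mul_left,
          Multiset.map_bind, Multiset.sum_bind]
        apply congrArg
        apply Multiset.map_congr rfl
        intro α _
        exact J_mul hXd (τ 0) α T

/-- Converting a multiset sum to a `Finsupp` sum over counts. -/
lemma toFinsupp_sum_eq {α : Type*} [DecidableEq α] (m : Multiset α) (g : α → ℝ) :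
    (Multiset.toFinsupp m).sum (fun a k => (k : ℝ) * g a) = (m.map g).sum := by
  induction m using Multiset.induction with
  | empty => simp
  | cons a s ihs =>
      have : (a ::ₘ s) = ({a} : Multiset α) + s := by
        rw [Multiset.singleton_add]
      rw [this, Multiset.toFinsupp_add, Multiset.toFinsupp_singleton,
        Finsupp.sum_add_index' (by intro b; simp)
          (by intro b k₁ k₂; push_cast; ring),
        Finsupp.sum_single_index (by simp), ihs]
      simp [add_comm]

/-- Any finite product of iterated integrals is a linear combination of
single iterated integrals with nonnegative integer coefficients, the coefficients depending
only on the words (not on the drivers) and supported on words of total length. -/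
theorem prod_iterated_integrals_eq_linear_combination {n : ℕ} (hn : 1 ≤ n) (T : ℝ)
    (hT : 0 < T) (p : ℕ) (τ : Fin p → List (Fin n)) :
    ∃ c : List (Fin n) →₀ ℕ,
      (∀ α ∈ c.support, α.length = ∑ i, (τ i).length) ∧
      ∀ X : Fin n → ℝ → ℝ, (∀ i, ContDiff ℝ 1 (X i)) →
        (∏ i, J X (τ i) T) = c.sum (fun α k => (k : ℝ) * J X α T) := by
  obtain ⟨m, hmlen, hm⟩ := main_multiset T p τ
  refine ⟨Multiset.toFinsupp m, ?_, ?_⟩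
  · intro α hα
    rw [Multiset.toFinsupp_support, Multiset.mem_toFinset] at hα
    exact hmlen α hα
  · intro X hXd
    rw [hm X hXd, toFinsupp_sum_eq]
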